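/- Let q be a prime power, n a positive integer with n | q−1, and α ∈ F_q a primitive n-th root of unity. Let r, k be positive integers with r | k, (r+1) | n, μ = k/r, and μ(r+1) ≤ n. Let C ⊆ F_q^n be the linear span of the vectors g_j = (1, α^j, α^{2j}, …, α^{(n−1)j}) for j ∈ {0, 1, …, μ(r+1)−2} \ {ℓ(r+1)−1 : ℓ = 1, …, μ−1}. Then: (i) C is a cyclic code whose complete defining set of zeros is the disjoint union D ∪ L̄, where D = {α^i : 1 ≤ i ≤ n−μ(r+1)+1} and L̄ = {α^{n−(μ−l)(r+1)+1} : l = 1, 2, …, μ−1}; (ii) dim C = k; (iii) C has locality r and minimum distance d(C) = n − μ(r+1) + 2, so C is an optimal (n,k,r) LRC code, i.e., d(C) = n − k − ⌈k/r⌉ + 2. -/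

import Mathlib

open scoped BigOperators

namespace LRC

/-- Hamming weight of a vector. -/
noncomputable def hwt {n : ℕ} {F : Type*} [Zero F] (c : Fin n → F) : ℕ :=
  Nat.card {i : Fin n // c i ≠ 0}

/-- A linear code is cyclic if it is closed under the cyclic shift of coordinates. -/
def IsCyclicCode {n : ℕ} [NeZero n] {F : Type*} [Field F] (C : Submodule F (Fin n → F)) : Prop :=
  ∀ c ∈ C, (fun i : Fin n => c (i - 1)) ∈ C

/-- `A` is a recovery set for coordinate `i` of the code `C`. -/
def IsRecoverySet {n : ℕ} {F : Type*} [Field F] (C : Submodule F (Fin n → F)) (i : Fin n)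
    (A : Finset (Fin n)) : Prop :=
  i ∉ A ∧ ∃ φ : ((j : A) → F) → F, ∀ c ∈ C, c i = φ (fun j => c j)

/-- The code `C` has locality `r`. -/
def HasLocality {n : ℕ} {F : Type*} [Field F] (C : Submodule F (Fin n → F)) (r : ℕ) : Prop :=
  ∀ i : Fin n, ∃ A : Finset (Fin n), A.card ≤ r ∧ IsRecoverySet C i A

/-- Complete defining set of zeros of a cyclic code (locator field = symbol field). -/
def definingSet {n : ℕ} {F : Type*} [Field F] (C : Submodule F (Fin n → F)) : Set F :=
  {β | β ^ n = 1 ∧ ∀ c ∈ C, ∑ j : Fin n, c j * β ^ (j : ℕ) = 0}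

/-- Complete defining set of zeros of a cyclic code in an extension (locator) field `K`. -/
def definingSetExt (n : ℕ) {F K : Type*} [Field F] [Field K] [Algebra F K]
    (C : Submodule F (Fin n → F)) : Set K :=
  {β | β ^ n = 1 ∧ ∀ c ∈ C, ∑ j : Fin n, algebraMap F K (c j) * β ^ (j : ℕ) = 0}

/-- The cyclic code with a given set of zeros. -/
def codeOfZeros (n : ℕ) {F : Type*} [Field F] (Z : Set F) : Submodule F (Fin n → F) where
  carrier := {c | ∀ β ∈ Z, ∑ j : Fin n, c j * β ^ (j : ℕ) = 0}
  add_mem' := by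
    intro a b ha hb β hβ
    have h1 := ha β hβ
    have h2 := hb β hβ
    calc ∑ j : Fin n, (a + b) j * β ^ (j : ℕ)
        = (∑ j : Fin n, a j * β ^ (j : ℕ)) + ∑ j : Fin n, b j * β ^ (j : ℕ) := by
          rw [← Finset.sum_add_distrib]
          exact Finset.sum_congr rfl (by intro j _; simp [add_mul])
      _ = 0 := by rw [h1, h2, add_zero]
  zero_mem' := by intro β hβ; simp
  smul_mem' := by
    intro t a ha β hβ
    have h1 := ha β hβ
    calc ∑ j : Fin n, (t • a) j * β ^ (j : ℕ)
        = t * ∑ j : Fin n, a j * β ^ (j : ℕ) := by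
          rw [Finset.mul_sum]
          exact Finset.sum_congr rfl (by intro j _; simp [mul_assoc])
      _ = 0 := by rw [h1, mul_zero]

/-- Minimum distance: least Hamming weight of a nonzero codeword. -/
noncomputable def minDist {n : ℕ} {F : Type*} [Field F] (C : Submodule F (Fin n → F)) : ℕ :=
  sInf {w | ∃ c ∈ C, c ≠ 0 ∧ hwt c = w}

/-- The dual code under the standard bilinear form. -/
def dualCode {n : ℕ} {F : Type*} [Field F] (C : Submodule F (Fin n → F)) :
    Submodule F (Fin n → F) where
  carrier := {y | ∀ c ∈ C, ∑ i : Fin n, c i * y i = 0}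
  add_mem' := by
    intro a b ha hb c hc
    have h1 := ha c hc
    have h2 := hb c hc
    calc ∑ i : Fin n, c i * (a + b) i
        = (∑ i : Fin n, c i * a i) + ∑ i : Fin n, c i * b i := by
          rw [← Finset.sum_add_distrib]
          exact Finset.sum_congr rfl (by intro j _; simp [mul_add])
      _ = 0 := by rw [h1, h2, add_zero]
  zero_mem' := by intro c hc; simp
  smul_mem' := by
    intro t a ha c hc
    have h1 := ha c hc
    calc ∑ i : Fin n, c i * (t • a) i
        = t * ∑ i : Fin n, c i * a i := by
          rw [Finset.mul_sum]
          exact Finset.sum_congr rfl (by intro j _; simp [mul_assoc]; ring)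
      _ = 0 := by rw [h1, mul_zero]



lemma geom_zero {F : Type*} [Field F] {N : ℕ} {β : F} (h1 : β ≠ 1) (hN : β ^ N = 1) :
    ∑ s ∈ Finset.range N, β ^ s = 0 := by
  have h := geom_sum_mul β N
  rw [hN, sub_self] at h
  rcases mul_eq_zero.1 h with h | h
  · exact h
  · exact absurd (sub_eq_zero.1 h) h1

lemma pow_mod_eq {F : Type*} [Monoid F] {α : F} {n : ℕ} (hα : α ^ n = 1) (a : ℕ) :
    α ^ (a % n) = α ^ a := by
  conv_rhs => rw [← Nat.div_add_mod a n, pow_add, pow_mul, hα, one_pow, one_mul]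

lemma span_check {n : ℕ} {F : Type*} [Field F] {S : Set (Fin n → F)} {ι : Type}
    (t : Finset ι) (e : ι → Fin n) (u : ι → F)
    (h : ∀ g ∈ S, ∑ s ∈ t, u s * g (e s) = 0) :
    ∀ c ∈ Submodule.span F S, ∑ s ∈ t, u s * c (e s) = 0 := by
  intro c hc
  induction hc using Submodule.span_induction with
  | mem x hx => exact h x hx
  | zero => simp
  | add x y hx hy ihx ihy =>
      have : ∑ s ∈ t, u s * (x + y) (e s)
          = (∑ s ∈ t, u s * x (e s)) + ∑ s ∈ t, u s * y (e s) := by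
        rw [← Finset.sum_add_distrib]; exact Finset.sum_congr rfl (by intro s _; simp [mul_add])
      rw [this, ihx, ihy, add_zero]
  | smul a x hx ihx =>
      have : ∑ s ∈ t, u s * (a • x) (e s) = a * ∑ s ∈ t, u s * x (e s) := by
        rw [Finset.mul_sum]; exact Finset.sum_congr rfl (by intro s _; simp; ring)
      rw [this, ihx, mul_zero]

lemma sum_pow_root {F : Type*} [Field F] {n : ℕ} (hn : 0 < n) {α : F}
    (hα : IsPrimitiveRoot α n) (a : ℕ) :
    ∑ i ∈ Finset.range n, (α ^ a) ^ i = if n ∣ a then (n : F) else 0 := by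
  by_cases h : n ∣ a
  · rw [if_pos h, (hα.pow_eq_one_iff_dvd a).2 h]
    simp
  · rw [if_neg h]
    refine geom_zero ?_ ?_
    · exact fun h1 => h ((hα.pow_eq_one_iff_dvd a).1 h1)
    · rw [← pow_mul, mul_comm, pow_mul, hα.pow_eq_one, one_pow]

lemma mem_support_mul {F : Type*} [Field F] {p q : Polynomial F} {j : ℕ}
    (h : j ∈ (p * q).support) : ∃ a ∈ p.support, ∃ b ∈ q.support, a + b = j := by
  by_contra h'
  push_neg at h'
  apply Polynomial.mem_support_iff.1 h
  rw [Polynomial.coeff_mul]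
  refine Finset.sum_eq_zero ?_
  rintro ⟨a, b⟩ hab
  rw [Finset.HasAntidiagonal.mem_antidiagonal] at hab
  by_cases ha : p.coeff a = 0
  · simp [ha]
  · have hb : q.coeff b = 0 := by
      by_contra hb
      exact h' a (Polynomial.mem_support_iff.2 ha) b (Polynomial.mem_support_iff.2 hb) hab
    simp [hb]

lemma support_X_pow_sub_C {F : Type*} [Field F] {a : ℕ} {c : F} {j : ℕ}
    (h : j ∈ (Polynomial.X ^ a - Polynomial.C c).support) : j = 0 ∨ j = a := by
  by_contra h'
  push_neg at h'
  apply Polynomial.mem_support_iff.1 h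
  simp [Polynomial.coeff_X_pow, h'.1, h'.2, Polynomial.coeff_C]

lemma support_prod_X_pow_sub {F : Type*} [Field F] (s : Finset ℕ) (c : ℕ → F) (a : ℕ) :
    ∀ j ∈ (∏ l ∈ s, (Polynomial.X ^ a - Polynomial.C (c l))).support,
      ∃ b ≤ s.card, j = a * b := by
  classical
  induction s using Finset.induction_on with
  | empty =>
      intro j hj
      rw [Finset.prod_empty] at hj
      have : j = 0 := by
        have := Polynomial.le_natDegree_of_mem_supp j hj
        simpa using this
      exact ⟨0, by simp, by simp [this]⟩
  | @insert x s hx ih =>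
      intro j hj
      rw [Finset.prod_insert hx] at hj
      obtain ⟨u, hu, w, hw, huw⟩ := mem_support_mul hj
      obtain ⟨b, hb, rfl⟩ := ih w hw
      rcases support_X_pow_sub_C hu with rfl | rfl
      · exact ⟨b, by simp [Finset.card_insert_of_notMem hx]; omega, by omega⟩
      · exact ⟨b + 1, by simp [Finset.card_insert_of_notMem hx]; omega, by rw [← huw]; ring⟩

lemma card_zeros_le {F : Type*} [Field F] {n : ℕ} [NeZero n] {α : F}
    (hα : IsPrimitiveRoot α n) (p : Polynomial F) (hp : p ≠ 0)
    (Z : Finset (Fin n)) (hz : ∀ i ∈ Z, p.eval (α ^ (i : ℕ)) = 0) :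
    Z.card ≤ p.natDegree := by
  classical
  have hinj : Set.InjOn (fun i : Fin n => α ^ (i : ℕ)) ↑Z := by
    intro i _ j _ hij
    exact Fin.ext (hα.pow_inj i.isLt j.isLt hij)
  have h1 : Z.card = (Z.image (fun i : Fin n => α ^ (i : ℕ))).card :=
    (Finset.card_image_of_injOn hinj).symm
  have h2 : Z.image (fun i : Fin n => α ^ (i : ℕ)) ⊆ p.roots.toFinset := by
    intro x hx
    obtain ⟨i, hi, rfl⟩ := Finset.mem_image.1 hx
    rw [Multiset.mem_toFinset, Polynomial.mem_roots hp]
    exact hz i hi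
  calc Z.card = _ := h1
    _ ≤ p.roots.toFinset.card := Finset.card_le_card h2
    _ ≤ Multiset.card p.roots := Multiset.toFinset_card_le _
    _ ≤ p.natDegree := p.card_roots'

/-- Generator vectors. -/
def gvec {F : Type*} [Field F] (α : F) (n : ℕ) (j : ℕ) : Fin n → F :=
  fun i => α ^ ((i : ℕ) * j)

/-- The cyclic Reed-Solomon-like LRC code: characterization of its zeros,
dimension, locality, and optimal minimum distance. -/
theorem stmt0 {F : Type*} [Field F] [Fintype F] (q n r k μ : ℕ) [NeZero n]
    (hq : Fintype.card F = q) (hn : 0 < n) (hnq : n ∣ q - 1)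
    (α : F) (hα : IsPrimitiveRoot α n)
    (hr : 0 < r) (hk : 0 < k) (hrk : r ∣ k) (hrn : (r + 1) ∣ n)
    (hμ : μ = k / r) (hμn : μ * (r + 1) ≤ n)
    (J : Set ℕ)
    (hJ : J = {j | j ≤ μ * (r + 1) - 2} \ {j | ∃ l : ℕ, 1 ≤ l ∧ l ≤ μ - 1 ∧ j = l * (r + 1) - 1})
    (C : Submodule F (Fin n → F))
    (hC : C = Submodule.span F ((fun j : ℕ => fun i : Fin n => α ^ ((i : ℕ) * j)) '' J))
    (D L : Set F)
    (hD : D = {β | ∃ i : ℕ, 1 ≤ i ∧ i ≤ n - μ * (r + 1) + 1 ∧ β = α ^ i})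
    (hL : L = {β | ∃ l : ℕ, 1 ≤ l ∧ l ≤ μ - 1 ∧ β = α ^ (n - (μ - l) * (r + 1) + 1)}) :
    IsCyclicCode C ∧ definingSet C = D ∪ L ∧ Disjoint D L ∧
    Module.finrank F C = k ∧
    HasLocality C r ∧
    minDist C = n - μ * (r + 1) + 2 ∧
    minDist C = n - k - k / r + 2 := by
  classical
  have hCv : C = Submodule.span F (gvec α n '' J) := hC
  clear hC
  -- numeric setup
  have hq1 : 1 ≤ q := hq ▸ Fintype.card_pos
  have hqF : ((q : ℕ) : F) = 0 := hq ▸ FiniteField.cast_card_eq_zero F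
  have hnF : (n : F) ≠ 0 := by
    intro h
    obtain ⟨c, hc⟩ := hnq
    have h1 : ((q - 1 : ℕ) : F) = 0 := by rw [hc]; push_cast; rw [h]; ring
    have h2 : (q : ℕ) = (q - 1) + 1 := by omega
    rw [h2] at hqF
    push_cast at hqF
    rw [h1] at hqF
    simp at hqF
  obtain ⟨m, hm⟩ := hrn
  have hα1 : α ^ n = 1 := hα.pow_eq_one
  have hmpos : 0 < m := by
    rcases Nat.eq_zero_or_pos m with h | h
    · rw [h, mul_zero] at hm; omega
    · exact h
  have hμpos : 1 ≤ μ := by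
    have h1 : r ≤ k := Nat.le_of_dvd hk hrk
    rw [hμ]
    exact (Nat.one_le_div_iff hr).2 h1
  have hkμ : k = r * μ := by rw [hμ]; exact (Nat.mul_div_cancel' hrk).symm
  have hMsplit : μ * (r + 1) = r * μ + μ := by ring
  have hM2 : 2 ≤ μ * (r + 1) := by
    have := Nat.mul_le_mul hμpos (show 2 ≤ r + 1 by omega)
    omega
  have hmn : n = m * (r + 1) := by rw [hm]; ring
  have hμm : μ ≤ m := by
    have h1 : μ * (r + 1) ≤ m * (r + 1) := by omega
    exact Nat.le_of_mul_le_mul_right h1 (by omega)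
  have hn2 : 2 ≤ n := by omega
  -- J characterization
  have hJc : ∀ j : ℕ, j ∈ J ↔ j + 1 < μ * (r + 1) ∧ ¬(r + 1) ∣ (j + 1) := by
    intro j
    rw [hJ]
    simp only [Set.mem_diff, Set.mem_setOf_eq, not_exists]
    constructor
    · rintro ⟨h1, h2⟩
      refine ⟨by omega, fun hdvd => ?_⟩
      obtain ⟨d, hd⟩ := hdvd
      rcases Nat.eq_zero_or_pos d with rfl | hd1
      · rw [mul_zero] at hd; omega
      have hcm : (r + 1) * d = d * (r + 1) := mul_comm _ _
      have hdμ : d < μ := by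
        by_contra hh
        push_neg at hh
        have h3 : μ * (r + 1) ≤ d * (r + 1) := Nat.mul_le_mul_right _ hh
        omega
      exact h2 d ⟨hd1, by omega, by omega⟩
    · rintro ⟨h1, h2⟩
      refine ⟨by omega, ?_⟩
      rintro l ⟨hl1, hl2, hl3⟩
      apply h2
      have hcm : l * (r + 1) = (r + 1) * l := mul_comm _ _
      have hb : 1 * (r + 1) ≤ l * (r + 1) := Nat.mul_le_mul_right _ hl1
      exact ⟨l, by omega⟩
  have hvJ : ∀ j ∈ J, gvec α n j ∈ C := by
    intro j hj
    rw [hCv]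
    exact Submodule.subset_span ⟨j, hj, rfl⟩
  -- generator sums
  have hgen : ∀ j s : ℕ, ∑ i : Fin n, gvec α n j i * (α ^ s) ^ (i : ℕ)
      = if n ∣ (j + s) then (n : F) else 0 := by
    intro j s
    have h1 : ∀ i : Fin n, gvec α n j i * (α ^ s) ^ (i : ℕ) = (α ^ (j + s)) ^ (i : ℕ) := by
      intro i
      show α ^ ((i : ℕ) * j) * (α ^ s) ^ (i : ℕ) = _
      rw [← pow_mul, ← pow_add, ← pow_mul]
      congr 1
      ring
    rw [Finset.sum_congr rfl fun i _ => h1 i,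
      Fin.sum_univ_eq_sum_range (fun i => (α ^ (j + s)) ^ i) n]
    exact sum_pow_root hn hα (j + s)
  have hone : ((1 : Fin n) : ℕ) = 1 := by
    rw [Fin.val_one']
    exact Nat.mod_eq_of_lt hn2
  -- Part 1 : cyclic
  have hcyc : IsCyclicCode C := by
    intro c hc
    rw [hCv] at hc ⊢
    induction hc using Submodule.span_induction with
    | mem x hx =>
        obtain ⟨j, hj, rfl⟩ := hx
        have key : (fun i : Fin n => gvec α n j (i - 1)) = α ^ ((n - 1) * j) • gvec α n j := by
          funext i
          show α ^ (((i - 1 : Fin n) : ℕ) * j) = α ^ ((n - 1) * j) * α ^ ((i : ℕ) * j)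
          have h1 : ((i - 1 : Fin n) : ℕ) = ((i : ℕ) + (n - 1)) % n := by
            rw [Fin.sub_def, hone]
            show (n - 1 + (i : ℕ)) % n = ((i : ℕ) + (n - 1)) % n
            congr 1
            omega
          rw [h1, pow_mul, pow_mod_eq hα1, ← pow_mul, ← pow_add]
          congr 1
          ring
        rw [key]
        exact Submodule.smul_mem _ _ (Submodule.subset_span ⟨j, hj, rfl⟩)
    | zero =>
        have h0 : (fun i : Fin n => (0 : Fin n → F) (i - 1)) = 0 := rfl
        rw [h0]; exact Submodule.zero_mem _
    | add x y hx hy ihx ihy =>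
        have h0 : (fun i : Fin n => (x + y) (i - 1))
            = (fun i : Fin n => x (i - 1)) + fun i : Fin n => y (i - 1) := rfl
        rw [h0]; exact Submodule.add_mem _ ihx ihy
    | smul a x hx ihx =>
        have h0 : (fun i : Fin n => (a • x) (i - 1)) = a • fun i : Fin n => x (i - 1) := rfl
        rw [h0]; exact Submodule.smul_mem _ _ ihx
  -- Part 2 : defining set
  have hDS : definingSet C = D ∪ L := by
    ext β
    simp only [definingSet, Set.mem_setOf_eq, Set.mem_union]
    constructor
    · rintro ⟨hβn, hall⟩
      obtain ⟨s, hsn, rfl⟩ := hα.eq_pow_of_pow_eq_one hβn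
      have hns : ∀ j ∈ J, ¬ (n ∣ (j + s)) := by
        intro j hj hdvd
        have h0 := hall (gvec α n j) (hvJ j hj)
        rw [hgen j s, if_pos hdvd] at h0
        exact hnF h0
      have h0J : (0 : ℕ) ∈ J := by
        rw [hJc]
        refine ⟨by omega, fun hdvd => ?_⟩
        have := Nat.le_of_dvd (by omega) hdvd
        omega
      have hs0 : s ≠ 0 := by
        rintro rfl
        exact hns 0 h0J (by simp)
      by_cases hsD : s ≤ n - μ * (r + 1) + 1
      · left
        rw [hD]
        exact ⟨s, by omega, hsD, rfl⟩
      · right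
        push_neg at hsD
        have hdvd : (r + 1) ∣ (n - s + 1) := by
          by_contra hnd
          have hmem : (n - s) ∈ J := (hJc _).2 ⟨by omega, hnd⟩
          apply hns _ hmem
          have h5 : n - s + s = n := by omega
          rw [h5]
        obtain ⟨d, hd⟩ := hdvd
        have hcm : (r + 1) * d = d * (r + 1) := mul_comm _ _
        have hd1 : 1 ≤ d := by
          rcases Nat.eq_zero_or_pos d with rfl | h
          · rw [mul_zero] at hd; omega
          · exact h
        have hb1 : 1 * (r + 1) ≤ d * (r + 1) := Nat.mul_le_mul_right _ hd1
        have hdμ : d < μ := by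
          by_contra hh
          push_neg at hh
          have h3 : μ * (r + 1) ≤ d * (r + 1) := Nat.mul_le_mul_right _ hh
          omega
        rw [hL]
        refine ⟨μ - d, by omega, by omega, ?_⟩
        have h6 : μ - (μ - d) = d := by omega
        rw [h6]
        congr 1
        omega
    · intro hβ
      have hrep : ∃ s : ℕ, s < n ∧ β = α ^ s ∧ ∀ j ∈ J, ¬ (n ∣ (j + s)) := by
        rcases hβ with hd | hl
        · rw [hD] at hd
          obtain ⟨i0, hi1, hi2, rfl⟩ := hd
          refine ⟨i0, by omega, rfl, ?_⟩
          intro j hj hdvd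
          rw [hJc] at hj
          have h1 := Nat.le_of_dvd (by omega) hdvd
          omega
        · rw [hL] at hl
          obtain ⟨l, hl1, hl2, rfl⟩ := hl
          have hd1 : 1 ≤ μ - l := by omega
          have hb1 : 1 * (r + 1) ≤ (μ - l) * (r + 1) := Nat.mul_le_mul_right _ hd1
          have hb2 : (μ - l) * (r + 1) ≤ μ * (r + 1) := Nat.mul_le_mul_right _ (by omega)
          refine ⟨n - (μ - l) * (r + 1) + 1, by omega, rfl, ?_⟩
          intro j hj hdvd
          rw [hJc] at hj
          obtain ⟨e0, he0⟩ := hdvd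
          rcases e0 with _ | e0
          · omega
          rcases e0 with _ | e0
          · apply hj.2
            refine ⟨μ - l, ?_⟩
            have hcm : (μ - l) * (r + 1) = (r + 1) * (μ - l) := mul_comm _ _
            omega
          · have h2 : n * 2 ≤ n * (e0 + 1 + 1) := Nat.mul_le_mul_left _ (by omega)
            omega
      obtain ⟨s, hsn, rfl, hkey⟩ := hrep
      refine ⟨?_, ?_⟩
      · rw [← pow_mul, mul_comm s n, pow_mul, hα1, one_pow]
      · intro c hcC
        rw [hCv] at hcC
        have h := span_check Finset.univ id (fun i : Fin n => (α ^ s) ^ ((i : Fin n) : ℕ))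
          (by
            rintro g ⟨j, hj, rfl⟩
            have h2 : ∑ i : Fin n, (α ^ s) ^ ((i : Fin n) : ℕ) * gvec α n j (id i)
                = ∑ i : Fin n, gvec α n j i * (α ^ s) ^ (i : ℕ) := by
              refine Finset.sum_congr rfl fun i _ => ?_
              simp [mul_comm]
            rw [h2, hgen j s, if_neg (hkey j hj)]) c hcC
        rw [← h]
        refine Finset.sum_congr rfl fun i _ => ?_
        simp [mul_comm]
  -- Part 3 : disjointness
  have hdisj : Disjoint D L := by
    rw [Set.disjoint_left]
    intro β hβD hβL
    rw [hD] at hβD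
    rw [hL] at hβL
    obtain ⟨i0, hi1, hi2, rfl⟩ := hβD
    obtain ⟨l, hl1, hl2, heq⟩ := hβL
    have hd1 : 1 ≤ μ - l := by omega
    have hb1 : 1 * (r + 1) ≤ (μ - l) * (r + 1) := Nat.mul_le_mul_right _ hd1
    have hb2 : (μ - l + 1) * (r + 1) ≤ μ * (r + 1) := Nat.mul_le_mul_right _ (by omega)
    have hb3 : (μ - l + 1) * (r + 1) = (μ - l) * (r + 1) + (r + 1) := by ring
    have h4 := hα.pow_inj (show i0 < n by omega)
      (show n - (μ - l) * (r + 1) + 1 < n by omega) heq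
    omega
  -- Jf
  set Jf : Finset ℕ := (Finset.range (μ * (r + 1) - 1)).filter (fun j => ¬ (r + 1) ∣ (j + 1))
    with hJf
  have hJJf : J = ↑Jf := by
    ext j
    rw [hJc, hJf]
    simp only [Finset.coe_filter, Finset.mem_range, Set.mem_setOf_eq]
    constructor
    · rintro ⟨h1, h2⟩; exact ⟨by omega, h2⟩
    · rintro ⟨h1, h2⟩; exact ⟨by omega, h2⟩
  have hJfcard : Jf.card = k := by
    have h1 := Finset.card_filter_add_card_filter_not
      (s := Finset.range (μ * (r + 1) - 1)) (p := fun j => (r + 1) ∣ (j + 1))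
    have h2 : ((Finset.range (μ * (r + 1) - 1)).filter (fun j => (r + 1) ∣ (j + 1))).card
        = (μ * (r + 1) - 1) / (r + 1) := Nat.card_multiples _ _
    have h3 : (μ * (r + 1) - 1) / (r + 1) = μ - 1 := by
      have h4 : μ * (r + 1) - 1 = (r + 1) * (μ - 1) + r := by
        have h5 : (r + 1) * (μ - 1) + (r + 1) = (r + 1) * μ := by
          rw [← Nat.mul_succ]
          congr 1
          omega
        have h6 : (r + 1) * μ = μ * (r + 1) := mul_comm _ _
        omega
      rw [h4, Nat.mul_add_div (by omega), Nat.div_eq_of_lt (by omega), add_zero]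
    have h6 : (Finset.range (μ * (r + 1) - 1)).card = μ * (r + 1) - 1 := Finset.card_range _
    rw [hJf]
    omega
  have hCr : C = Submodule.span F (Set.range fun j : {x // x ∈ Jf} => gvec α n (j : ℕ)) := by
    rw [hCv, hJJf, Set.image_eq_range]
    rfl
  -- Part 4 : dimension
  have hvlin : LinearIndependent F (fun j : {x // x ∈ Jf} => gvec α n (j : ℕ)) := by
    rw [Fintype.linearIndependent_iff]
    intro gc hgc
    set p : Polynomial F := ∑ j : {x // x ∈ Jf}, Polynomial.C (gc j) * Polynomial.X ^ ((j : ℕ))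
      with hp
    have hpe : ∀ i : Fin n, p.eval (α ^ (i : ℕ)) = 0 := by
      intro i
      rw [hp, Polynomial.eval_finset_sum]
      have h7 := congrFun hgc i
      rw [Finset.sum_apply] at h7
      rw [Pi.zero_apply] at h7
      rw [← h7]
      refine Finset.sum_congr rfl fun j _ => ?_
      rw [Polynomial.eval_mul, Polynomial.eval_C, Polynomial.eval_pow, Polynomial.eval_X,
        ← pow_mul]
      rw [Pi.smul_apply, smul_eq_mul]
      rfl
    have hpz : p = 0 := by
      by_contra hne
      have h1 := card_zeros_le hα p hne Finset.univ (fun i _ => hpe i)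
      have h2 : (Finset.univ : Finset (Fin n)).card = n := by simp
      have hdeg : p.natDegree ≤ μ * (r + 1) - 2 := by
        rw [hp]
        refine Polynomial.natDegree_sum_le_of_forall_le _ _ fun j _ => ?_
        refine le_trans (Polynomial.natDegree_C_mul_X_pow_le _ _) ?_
        have hj2 := Finset.mem_range.1 (Finset.mem_filter.1 j.2).1
        omega
      omega
    intro j
    have hco : p.coeff (j : ℕ) = gc j := by
      rw [hp, Polynomial.finset_sum_coeff]
      rw [Finset.sum_eq_single j]
      · rw [Polynomial.coeff_C_mul, Polynomial.coeff_X_pow, if_pos rfl, mul_one]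
      · intro b _ hbj
        have hne2 : ¬ ((j : ℕ) = (b : ℕ)) := fun h => hbj (Subtype.ext h.symm)
        rw [Polynomial.coeff_C_mul, Polynomial.coeff_X_pow, if_neg hne2, mul_zero]
      · intro h; exact absurd (Finset.mem_univ j) h
    rw [← hco, hpz, Polynomial.coeff_zero]
  have hfr : Module.finrank F C = k := by
    rw [hCr, finrank_span_eq_card hvlin]
    rw [Fintype.card_coe]
    exact hJfcard
  -- Part 5 : locality
  have hloc : HasLocality C r := by
    intro i
    have hsm_lt : ∀ s, s ≤ r → s * m < n := by
      intro s hs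
      have h1 : s * m ≤ r * m := Nat.mul_le_mul_right _ hs
      have h2 : r * m + m = (r + 1) * m := by ring
      omega
    letI := Fin.NatCast.instNatCast n
    set e : ℕ → Fin n := fun s => i + ((s * m : ℕ) : Fin n) with he
    have heval : ∀ s, s ≤ r → ((e s : Fin n) : ℕ) = ((i : ℕ) + s * m) % n := by
      intro s hs
      rw [he]
      simp only [Fin.add_def, Fin.val_natCast]
      rw [Nat.add_mod_mod]
    set A : Finset (Fin n) := (Finset.Icc 1 r).image e with hA
    have hiA : i ∉ A := by
      rw [hA]
      simp only [Finset.mem_image, Finset.mem_Icc, not_exists]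
      rintro s ⟨⟨hs1, hs2⟩, hes⟩
      have h0 : ((s * m : ℕ) : Fin n) = 0 := by
        have h01 : i + ((s * m : ℕ) : Fin n) = i + 0 := by rw [add_zero]; exact hes
        exact add_left_cancel h01
      have h2 : (s * m) % n = 0 := by
        have h3 := congrArg Fin.val h0
        simpa only [Fin.val_natCast, Fin.val_zero] using h3
      rw [Nat.mod_eq_of_lt (hsm_lt s hs2)] at h2
      have h3 : 1 * 1 ≤ s * m := Nat.mul_le_mul hs1 hmpos
      omega
    refine ⟨A, ?_, hiA, ?_⟩
    · calc A.card ≤ (Finset.Icc 1 r).card := Finset.card_image_le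
        _ = r := by rw [Nat.card_Icc]; omega
    · refine ⟨fun x => -∑ s ∈ (Finset.Icc 1 r).attach,
        α ^ ((s : ℕ) * m) * x ⟨e (s : ℕ), by rw [hA]; exact Finset.mem_image_of_mem _ s.2⟩, ?_⟩
      intro c hcC
      have hcheck : ∑ s ∈ Finset.range (r + 1), α ^ (s * m) * c (e s) = 0 := by
        rw [hCv] at hcC
        refine span_check (Finset.range (r + 1)) e (fun s => α ^ (s * m)) ?_ c hcC
        rintro g ⟨j, hj, rfl⟩
        have hterm : ∀ s ∈ Finset.range (r + 1),
            α ^ (s * m) * gvec α n j (e s) = α ^ ((i : ℕ) * j) * (α ^ (m * (j + 1))) ^ s := by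
          intro s hs
          rw [Finset.mem_range] at hs
          have h1 : gvec α n j (e s) = α ^ ((((i : ℕ) + s * m)) * j) := by
            show α ^ (((e s : Fin n) : ℕ) * j) = _
            rw [heval s (by omega), pow_mul, pow_mod_eq hα1, ← pow_mul]
          rw [h1, ← pow_add, ← pow_mul, ← pow_add]
          congr 1
          ring
        rw [Finset.sum_congr rfl hterm, ← Finset.mul_sum]
        have hb1 : (α ^ (m * (j + 1))) ^ (r + 1) = 1 := by
          rw [← pow_mul]
          have h2 : m * (j + 1) * (r + 1) = n * (j + 1) := by rw [hmn]; ring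
          rw [h2, pow_mul, hα1, one_pow]
        have hb2 : α ^ (m * (j + 1)) ≠ 1 := by
          intro hone1
          have h3 := (hα.pow_eq_one_iff_dvd _).1 hone1
          rw [hmn] at h3
          have h4 : (r + 1) ∣ (j + 1) := (Nat.mul_dvd_mul_iff_left hmpos).1 h3
          exact ((hJc j).1 hj).2 h4
        rw [geom_zero hb2 hb1, mul_zero]
      have hsplit := Finset.sum_range_succ' (fun s => α ^ (s * m) * c (e s)) r
      have hf0 : α ^ (0 * m) * c (e 0) = c i := by
        rw [he]
        simp
      have hIcc : Finset.Icc 1 r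
          = (Finset.range r).map ⟨fun s => s + 1, fun a b hab => by simpa using hab⟩ := by
        ext x
        simp only [Finset.mem_Icc, Finset.mem_map, Finset.mem_range,
          Function.Embedding.coeFn_mk]
        constructor
        · rintro ⟨h1, h2⟩
          exact ⟨x - 1, by omega, by show x - 1 + 1 = x; omega⟩
        · rintro ⟨a, ha, rfl⟩
          show 1 ≤ a + 1 ∧ a + 1 ≤ r; omega
      have hattach : ∑ s ∈ (Finset.Icc 1 r).attach, α ^ ((s : ℕ) * m) * c (e (s : ℕ))
          = ∑ s ∈ Finset.range r, α ^ ((s + 1) * m) * c (e (s + 1)) := by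
        rw [Finset.sum_attach (Finset.Icc 1 r) (fun s => α ^ (s * m) * c (e s))]
        rw [hIcc, Finset.sum_map]
        rfl
      show c i = -∑ s ∈ (Finset.Icc 1 r).attach, α ^ ((s : ℕ) * m) * c (e (s : ℕ))
      rw [hattach]
      rw [hsplit, hf0] at hcheck
      exact eq_neg_of_add_eq_zero_left (by rw [add_comm] at hcheck; exact hcheck)
  -- Part 6 : minimum distance
  set P : Polynomial F :=
    ∏ l ∈ Finset.Icc 1 (μ - 1), (Polynomial.X ^ (r + 1) - Polynomial.C (α ^ (l * (r + 1))))
    with hP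
  set g0 : Polynomial F :=
    ∏ t ∈ Finset.range (r - 1), (Polynomial.X - Polynomial.C (α ^ (t * m))) with hg0
  set f : Polynomial F := P * g0 with hf
  have hg0deg : g0.natDegree = r - 1 := by
    rw [hg0, Polynomial.natDegree_prod]
    · rw [Finset.sum_congr rfl fun t _ => Polynomial.natDegree_X_sub_C (α ^ (t * m))]
      rw [Finset.sum_const, Finset.card_range, smul_eq_mul, mul_one]
    · intro t _
      exact Polynomial.X_sub_C_ne_zero _
  have hfsupp : ∀ j ∈ f.support, j ∈ J := by
    intro j hj
    rw [hf] at hj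
    obtain ⟨u, hu, w, hw, rfl⟩ := mem_support_mul hj
    rw [hP] at hu
    obtain ⟨b, hb, rfl⟩ := support_prod_X_pow_sub _ _ _ u hu
    rw [Nat.card_Icc] at hb
    have hwle : w ≤ r - 1 := hg0deg ▸ Polynomial.le_natDegree_of_mem_supp w hw
    rw [hJc]
    have hbb : (r + 1) * b ≤ (r + 1) * (μ - 1) := Nat.mul_le_mul_left _ (by omega)
    have hex : (r + 1) * (μ - 1) + (r + 1) = (r + 1) * μ := by
      rw [← Nat.mul_succ]
      congr 1
      omega
    have hcm : (r + 1) * μ = μ * (r + 1) := mul_comm _ _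
    refine ⟨by omega, ?_⟩
    rintro ⟨d, hd⟩
    have h2 : (r + 1) ∣ (w + 1) := by
      have h3 : (r + 1) * d - (r + 1) * b = w + 1 := by omega
      exact h3 ▸ Nat.dvd_sub ⟨d, rfl⟩ ⟨b, rfl⟩
    have h5 := Nat.le_of_dvd (by omega) h2
    omega
  have hc0C : (fun i : Fin n => f.eval (α ^ (i : ℕ))) ∈ C := by
    have hrep : (fun i : Fin n => f.eval (α ^ (i : ℕ)))
        = ∑ j ∈ f.support, f.coeff j • gvec α n j := by
      funext i
      rw [Finset.sum_apply, Polynomial.eval_eq_sum, Polynomial.sum_def]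
      refine Finset.sum_congr rfl fun j hj => ?_
      rw [Pi.smul_apply, smul_eq_mul]
      show f.coeff j * (α ^ (i : ℕ)) ^ j = f.coeff j * α ^ ((i : ℕ) * j)
      rw [← pow_mul]
    rw [hrep]
    exact Submodule.sum_mem _ fun j hj => Submodule.smul_mem _ _ (hvJ j (hfsupp j hj))
  have hpoweq : ∀ a b : ℕ, α ^ a = α ^ b ↔ a % n = b % n := by
    intro a b
    constructor
    · intro h
      have h1 : α ^ (a % n) = α ^ (b % n) := by
        rw [pow_mod_eq hα1, pow_mod_eq hα1]; exact h
      exact hα.pow_inj (Nat.mod_lt _ hn) (Nat.mod_lt _ hn) h1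
    · intro h
      rw [← pow_mod_eq hα1 a, h, pow_mod_eq hα1]
  have hPfact : ∀ a b : ℕ, (a * (r + 1)) % n = (b * (r + 1)) % n ↔ a % m = b % m := by
    intro a b
    constructor
    · intro h
      have h2 : (a * (r + 1)) % (m * (r + 1)) = (b * (r + 1)) % (m * (r + 1)) := by
        rw [← hmn]; exact h
      rw [Nat.mul_mod_mul_right, Nat.mul_mod_mul_right] at h2
      exact Nat.eq_of_mul_eq_mul_right (by omega) h2
    · intro h
      have h2 : (a * (r + 1)) % (m * (r + 1)) = (b * (r + 1)) % (m * (r + 1)) := by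
        rw [Nat.mul_mod_mul_right, Nat.mul_mod_mul_right, h]
      rw [← hmn] at h2; exact h2
  have hPzero : ∀ i : Fin n,
      (P.eval (α ^ (i : ℕ)) = 0 ↔ ∃ l, 1 ≤ l ∧ l ≤ μ - 1 ∧ (i : ℕ) % m = l) := by
    intro i
    rw [hP, Polynomial.eval_prod, Finset.prod_eq_zero_iff]
    constructor
    · rintro ⟨l, hl, hz⟩
      rw [Finset.mem_Icc] at hl
      rw [Polynomial.eval_sub, Polynomial.eval_pow, Polynomial.eval_X, Polynomial.eval_C,
        sub_eq_zero, ← pow_mul, hpoweq] at hz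
      have h1 : (i : ℕ) % m = l % m := (hPfact _ _).1 hz
      have h2 : l % m = l := Nat.mod_eq_of_lt (by omega)
      exact ⟨l, hl.1, hl.2, by omega⟩
    · rintro ⟨l, hl1, hl2, hlm⟩
      refine ⟨l, Finset.mem_Icc.2 ⟨hl1, hl2⟩, ?_⟩
      rw [Polynomial.eval_sub, Polynomial.eval_pow, Polynomial.eval_X, Polynomial.eval_C,
        sub_eq_zero, ← pow_mul, hpoweq, hPfact]
      rw [hlm, Nat.mod_eq_of_lt (by omega)]
  have hg0zero : ∀ i : Fin n,
      (g0.eval (α ^ (i : ℕ)) = 0 ↔ ∃ t, t < r - 1 ∧ (i : ℕ) = t * m) := by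
    intro i
    rw [hg0, Polynomial.eval_prod, Finset.prod_eq_zero_iff]
    constructor
    · rintro ⟨t, ht, hz⟩
      rw [Finset.mem_range] at ht
      rw [Polynomial.eval_sub, Polynomial.eval_X, Polynomial.eval_C, sub_eq_zero, hpoweq] at hz
      have h1 : t * m ≤ r * m := Nat.mul_le_mul_right _ (by omega)
      have h2 : r * m + m = (r + 1) * m := by ring
      have htm : t * m < n := by omega
      rw [Nat.mod_eq_of_lt i.isLt, Nat.mod_eq_of_lt htm] at hz
      exact ⟨t, ht, hz⟩
    · rintro ⟨t, ht, hteq⟩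
      refine ⟨t, Finset.mem_range.2 ht, ?_⟩
      rw [Polynomial.eval_sub, Polynomial.eval_X, Polynomial.eval_C, sub_eq_zero, hpoweq, hteq]
  set Z1 : Finset ℕ :=
    ((Finset.Icc 1 (μ - 1)) ×ˢ Finset.range (r + 1)).image (fun p => p.1 + p.2 * m) with hZ1
  set Z2 : Finset ℕ := (Finset.range (r - 1)).image (fun t => t * m) with hZ2
  have hmodZ1 : ∀ x ∈ Z1, 1 ≤ x % m ∧ x % m ≤ μ - 1 := by
    intro x hx
    rw [hZ1, Finset.mem_image] at hx
    obtain ⟨⟨l, s⟩, hls, rfl⟩ := hx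
    rw [Finset.mem_product, Finset.mem_Icc, Finset.mem_range] at hls
    dsimp only at hls ⊢
    rw [Nat.add_mul_mod_self_right, Nat.mod_eq_of_lt (by omega)]
    exact ⟨hls.1.1, hls.1.2⟩
  have hmodZ2 : ∀ x ∈ Z2, x % m = 0 := by
    intro x hx
    rw [hZ2, Finset.mem_image] at hx
    obtain ⟨t, ht, rfl⟩ := hx
    exact Nat.mul_mod_left t m
  have hZ1card : Z1.card = (μ - 1) * (r + 1) := by
    rw [hZ1, Finset.card_image_of_injOn, Finset.card_product, Nat.card_Icc, Finset.card_range]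
    · simp
    · rintro ⟨l, s⟩ hls ⟨l', s'⟩ hls' heq
      simp only [Finset.coe_product, Set.mem_prod, Finset.mem_coe, Finset.mem_Icc,
        Finset.mem_range] at hls hls'
      dsimp only at heq
      have e1 : (l + s * m) % m = l := by
        rw [Nat.add_mul_mod_self_right]; exact Nat.mod_eq_of_lt (by omega)
      have e2 : (l' + s' * m) % m = l' := by
        rw [Nat.add_mul_mod_self_right]; exact Nat.mod_eq_of_lt (by omega)
      have h1 : l = l' := by rw [heq] at e1; omega
      have h2 : s = s' := by
        subst h1
        exact Nat.eq_of_mul_eq_mul_right hmpos (by omega)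
      simp [h1, h2]
  have hZ2card : Z2.card = r - 1 := by
    rw [hZ2, Finset.card_image_of_injOn, Finset.card_range]
    intro a _ b _ hab
    exact Nat.eq_of_mul_eq_mul_right hmpos hab
  have hZdisj : Disjoint Z1 Z2 := by
    rw [Finset.disjoint_left]
    intro x h1 h2
    have h3 := hmodZ1 x h1
    have h4 := hmodZ2 x h2
    omega
  set Z : Finset ℕ := Z1 ∪ Z2 with hZ
  have hZcard : Z.card = μ * (r + 1) - 2 := by
    rw [hZ, Finset.card_union_of_disjoint hZdisj, hZ1card, hZ2card]
    have h1 : (μ - 1) * (r + 1) + (r + 1) = μ * (r + 1) := by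
      rw [← Nat.succ_mul]
      congr 1
      omega
    omega
  have hZsub : ∀ x ∈ Z, x < n := by
    intro x hx
    rw [hZ, Finset.mem_union] at hx
    rcases hx with hx | hx
    · rw [hZ1, Finset.mem_image] at hx
      obtain ⟨⟨l, s⟩, hls, rfl⟩ := hx
      rw [Finset.mem_product, Finset.mem_Icc, Finset.mem_range] at hls
      dsimp only at hls ⊢
      have h1 : s * m ≤ r * m := Nat.mul_le_mul_right _ (by omega)
      have h2 : r * m + m = (r + 1) * m := by ring
      omega
    · rw [hZ2, Finset.mem_image] at hx
      obtain ⟨t, ht, rfl⟩ := hx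
      rw [Finset.mem_range] at ht
      have h1 : t * m ≤ r * m := Nat.mul_le_mul_right _ (by omega)
      have h2 : r * m + m = (r + 1) * m := by ring
      omega
  have hzero : ∀ i : Fin n, (f.eval (α ^ (i : ℕ)) = 0 ↔ (i : ℕ) ∈ Z) := by
    intro i
    have hilt : (i : ℕ) < n := i.isLt
    rw [hf, Polynomial.eval_mul, mul_eq_zero, hPzero i, hg0zero i, hZ, Finset.mem_union]
    constructor
    · rintro (⟨l, hl1, hl2, hlm⟩ | ⟨t, ht, hteq⟩)
      · left
        rw [hZ1, Finset.mem_image]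
        refine ⟨(l, (i : ℕ) / m), ?_, ?_⟩
        · rw [Finset.mem_product, Finset.mem_Icc, Finset.mem_range]
          refine ⟨⟨hl1, hl2⟩, ?_⟩
          rw [Nat.div_lt_iff_lt_mul hmpos]
          omega
        · have h1 := Nat.div_add_mod (i : ℕ) m
          have hcm : m * ((i : ℕ) / m) = ((i : ℕ) / m) * m := mul_comm _ _
          dsimp only
          omega
      · right
        rw [hZ2, Finset.mem_image]
        exact ⟨t, Finset.mem_range.2 ht, hteq.symm⟩
    · rintro (hx | hx)
      · left
        rw [hZ1, Finset.mem_image] at hx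
        obtain ⟨⟨l, s⟩, hls, heq⟩ := hx
        rw [Finset.mem_product, Finset.mem_Icc, Finset.mem_range] at hls
        dsimp only at hls heq
        refine ⟨l, hls.1.1, hls.1.2, ?_⟩
        rw [← heq, Nat.add_mul_mod_self_right]
        exact Nat.mod_eq_of_lt (by omega)
      · right
        rw [hZ2, Finset.mem_image] at hx
        obtain ⟨t, ht, heq⟩ := hx
        exact ⟨t, Finset.mem_range.1 ht, heq.symm⟩
  have hwt_eq : ∀ c : Fin n → F,
      hwt c = n - (Finset.univ.filter (fun i : Fin n => c i = 0)).card := by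
    intro c
    have h1 : hwt c = (Finset.univ.filter (fun i : Fin n => ¬ c i = 0)).card := by
      unfold hwt
      rw [Nat.card_eq_fintype_card, Fintype.card_subtype]
    have h2 := Finset.card_filter_add_card_filter_not
      (s := (Finset.univ : Finset (Fin n))) (p := fun i : Fin n => c i = 0)
    have h3 : (Finset.univ : Finset (Fin n)).card = n := by simp
    omega
  set c0 : Fin n → F := fun i => f.eval (α ^ (i : ℕ)) with hc0
  have hc0zeros : (Finset.univ.filter (fun i : Fin n => c0 i = 0)).card = Z.card := by
    rw [← Finset.card_image_of_injOn
      (f := fun i : Fin n => (i : ℕ)) (fun a _ b _ h => Fin.val_injective h)]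
    congr 1
    ext x
    simp only [Finset.mem_image, Finset.mem_filter, Finset.mem_univ, true_and]
    constructor
    · rintro ⟨i, hi, rfl⟩
      exact (hzero i).1 hi
    · intro hx
      have hxn : x < n := hZsub x hx
      exact ⟨⟨x, hxn⟩, (hzero ⟨x, hxn⟩).2 hx, rfl⟩
  have hc0ne : c0 ≠ 0 := by
    have hlt : Z.card < n := by omega
    have hns : ¬ (Finset.range n ⊆ Z) := by
      intro hsub
      have h2 := Finset.card_le_card hsub
      simp only [Finset.card_range] at h2
      omega
    rw [Finset.not_subset] at hns
    obtain ⟨x, hx, hxz⟩ := hns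
    rw [Finset.mem_range] at hx
    intro h0
    apply hxz
    exact (hzero ⟨x, hx⟩).1 (congrFun h0 ⟨x, hx⟩)
  have hWmem : ∃ c ∈ C, c ≠ 0 ∧ hwt c = n - μ * (r + 1) + 2 := by
    refine ⟨c0, hc0C, hc0ne, ?_⟩
    rw [hwt_eq, hc0zeros, hZcard]
    omega
  have hlow : ∀ c ∈ C, c ≠ 0 → n - μ * (r + 1) + 2 ≤ hwt c := by
    intro c hcC hcne
    rw [hCr, Submodule.mem_span_range_iff_exists_fun] at hcC
    obtain ⟨gc, hgc⟩ := hcC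
    set p : Polynomial F := ∑ j : {x // x ∈ Jf}, Polynomial.C (gc j) * Polynomial.X ^ ((j : ℕ))
      with hp
    have hpe : ∀ i : Fin n, p.eval (α ^ (i : ℕ)) = c i := by
      intro i
      rw [hp, Polynomial.eval_finset_sum]
      have h7 := congrFun hgc i
      rw [Finset.sum_apply] at h7
      rw [← h7]
      refine Finset.sum_congr rfl fun j _ => ?_
      rw [Polynomial.eval_mul, Polynomial.eval_C, Polynomial.eval_pow, Polynomial.eval_X,
        ← pow_mul]
      rw [Pi.smul_apply, smul_eq_mul]
      rfl
    have hpne : p ≠ 0 := by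
      intro h
      apply hcne
      funext i
      rw [← hpe i, h, Polynomial.eval_zero]
      rfl
    have hdeg : p.natDegree ≤ μ * (r + 1) - 2 := by
      rw [hp]
      refine Polynomial.natDegree_sum_le_of_forall_le _ _ fun j _ => ?_
      refine le_trans (Polynomial.natDegree_C_mul_X_pow_le _ _) ?_
      have hj2 := Finset.mem_range.1 (Finset.mem_filter.1 j.2).1
      omega
    have hcard := card_zeros_le hα p hpne (Finset.univ.filter fun i : Fin n => c i = 0)
      (fun i hi => by rw [hpe i]; exact (Finset.mem_filter.1 hi).2)
    have hfin : (Finset.univ.filter fun i : Fin n => c i = 0).card ≤ n :=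
      le_trans (Finset.card_filter_le _ _) (by simp)
    rw [hwt_eq]
    omega
  have hmd : minDist C = n - μ * (r + 1) + 2 := by
    have hmem2 : (n - μ * (r + 1) + 2) ∈ {w | ∃ c ∈ C, c ≠ 0 ∧ hwt c = w} := hWmem
    refine le_antisymm (Nat.sInf_le hmem2) ?_
    have hmem3 := Nat.sInf_mem (⟨_, hmem2⟩ : {w | ∃ c ∈ C, c ≠ 0 ∧ hwt c = w}.Nonempty)
    obtain ⟨c, hcC, hcne, hcw⟩ := hmem3
    show n - μ * (r + 1) + 2 ≤ sInf {w | ∃ c ∈ C, c ≠ 0 ∧ hwt c = w}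
    rw [← hcw]
    exact hlow c hcC hcne
  refine ⟨hcyc, hDS, hdisj, hfr, hloc, hmd, ?_⟩
  rw [hmd, ← hμ]
  omega

end LRC
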